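/- Let λ ≥ 1. A basis is (λ, RPGII) if and only if it is quasi-greedy and (λ, RPSLC). -/

import Mathlib

open Finset Filter

noncomputable section

variable {X : Type*} [NormedAddCommGroup X] [NormedSpace ℝ X]

/-- Projection `P_A x = ∑_{n ∈ A} e_n^*(x) e_n`. -/
def proj (f : ℕ → X →L[ℝ] ℝ) (e : ℕ → X) (A : Finset ℕ) (x : X) : X :=
  ∑ n ∈ A, f n x • e n

/-- `Λ` is a greedy set of `x`. -/
def GreedySet (f : ℕ → X →L[ℝ] ℝ) (x : X) (Λ : Finset ℕ) : Prop :=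
  ∀ n ∈ Λ, ∀ m, m ∉ Λ → |f m x| ≤ |f n x|

/-- A (biorthogonal, norm-bounded, fundamental) basis system. -/
structure BasisSystem (f : ℕ → X →L[ℝ] ℝ) (e : ℕ → X) : Prop where
  biorth : ∀ n m, f n (e m) = if n = m then (1 : ℝ) else 0
  dense : Dense (Submodule.span ℝ (Set.range e) : Set X)
  bounded : ∃ c₁ c₂ : ℝ, 0 < c₁ ∧ ∀ n, c₁ ≤ ‖e n‖ ∧ ‖e n‖ ≤ c₂ ∧ ‖f n‖ ≤ c₂

/-- `σ̌^Λ_m(x)`: inf of `‖x - P_I x‖` over `I = ∅` or intervals `I` with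
`Λ ≤ max I` and `|I| ≤ m`. -/
def checkSigma (f : ℕ → X →L[ℝ] ℝ) (e : ℕ → X) (Λ : Finset ℕ) (m : ℕ) (x : X) : ℝ :=
  sInf {r : ℝ | ∃ I : Finset ℕ,
    (I = ∅ ∨ ∃ a b : ℕ, a ≤ b ∧ I = Finset.Icc a b ∧ ∀ n ∈ Λ, n ≤ b) ∧
    I.card ≤ m ∧ r = ‖x - proj f e I x‖}

/-- `σ̂^Λ_m(x)`: inf of `‖x - P_I x‖` over `I = ∅` or intervals `I` with
`min I ≤ Λ` and `|I| ≤ m`. -/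
def hatSigma (f : ℕ → X →L[ℝ] ℝ) (e : ℕ → X) (Λ : Finset ℕ) (m : ℕ) (x : X) : ℝ :=
  sInf {r : ℝ | ∃ I : Finset ℕ,
    (I = ∅ ∨ ∃ a b : ℕ, a ≤ b ∧ I = Finset.Icc a b ∧ ∀ n ∈ Λ, a ≤ n) ∧
    I.card ≤ m ∧ r = ‖x - proj f e I x‖}

/-- `σ̃^{R,Λ}_m(x)`: inf of `‖x - P_A x‖` over `|A| ≤ m`, `A > Λ`. -/
def revSigma (f : ℕ → X →L[ℝ] ℝ) (e : ℕ → X) (Λ : Finset ℕ) (m : ℕ) (x : X) : ℝ :=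
  sInf {r : ℝ | ∃ A : Finset ℕ, A.card ≤ m ∧ (∀ n ∈ Λ, ∀ a ∈ A, n < a) ∧
    r = ‖x - proj f e A x‖}

/-- Reverse partially greedy with constant `C`. -/
def RPG (f : ℕ → X →L[ℝ] ℝ) (e : ℕ → X) (C : ℝ) : Prop :=
  ∀ (x : X) (m : ℕ) (Λ : Finset ℕ), Λ.card = m → GreedySet f x Λ →
    ‖x - proj f e Λ x‖ ≤ C * revSigma f e Λ m x

/-- `(λ, RPGII)` with constant `C`. -/
def RPGII (f : ℕ → X →L[ℝ] ℝ) (e : ℕ → X) (l C : ℝ) : Prop :=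
  ∀ (x : X) (m : ℕ) (Λ : Finset ℕ), Λ.card = ⌈l * (m : ℝ)⌉₊ → GreedySet f x Λ →
    ‖x - proj f e Λ x‖ ≤ C * checkSigma f e Λ m x

/-- Quasi-greedy with constant `C`. -/
def QG (f : ℕ → X →L[ℝ] ℝ) (e : ℕ → X) (C : ℝ) : Prop :=
  ∀ (x : X) (Λ : Finset ℕ), GreedySet f x Λ → ‖proj f e Λ x‖ ≤ C * ‖x‖

/-- Suppression quasi-greedy with constant `C`. -/
def SuppQG (f : ℕ → X →L[ℝ] ℝ) (e : ℕ → X) (C : ℝ) : Prop :=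
  ∀ (x : X) (Λ : Finset ℕ), GreedySet f x Λ → ‖x - proj f e Λ x‖ ≤ C * ‖x‖

/-- Reverse conservative with constant `C`. -/
def RevConservative (e : ℕ → X) (C : ℝ) : Prop :=
  ∀ A B : Finset ℕ, (∀ b ∈ B, ∀ a ∈ A, b < a) → A.card ≤ B.card →
    ‖∑ n ∈ A, e n‖ ≤ C * ‖∑ n ∈ B, e n‖

/-- `s(A) = max A - min A + 1` (and `s(∅) = 0`). -/
def spread (A : Finset ℕ) : ℕ :=
  if h : A.Nonempty then A.max' h - A.min' h + 1 else 0

/-- `(λ, reverse conservative of type II)` with constant `C`. -/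
def RevConsII (e : ℕ → X) (l C : ℝ) : Prop :=
  ∀ A B : Finset ℕ, (l - 1) * spread A + (A.card : ℝ) ≤ (B.card : ℝ) →
    (∀ b ∈ B, ∀ a ∈ A, b < a) → ‖∑ n ∈ A, e n‖ ≤ C * ‖∑ n ∈ B, e n‖

/-- `x` surrounds `A`: `supp x ∩ [min A, max A] = ∅` (vacuous for `A = ∅`). -/
def Surrounds (f : ℕ → X →L[ℝ] ℝ) (x : X) (A : Finset ℕ) : Prop :=
  ∀ a ∈ A, ∀ b ∈ A, ∀ n, a ≤ n → n ≤ b → f n x = 0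

/-- `(λ, RPSLC)` with constant `Δ`. -/
def RPSLC (f : ℕ → X →L[ℝ] ℝ) (e : ℕ → X) (l Δ : ℝ) : Prop :=
  ∀ x : X, (∀ n, |f n x| ≤ 1) →
    ∀ ε δ : ℕ → ℝ, (∀ n, |ε n| = 1) → (∀ n, |δ n| = 1) →
    ∀ A B : Finset ℕ, (l - 1) * spread A + (A.card : ℝ) ≤ (B.card : ℝ) →
    (∀ n ∈ B, f n x = 0) → (∀ b ∈ B, ∀ a ∈ A, b < a) → Surrounds f x A →
    ‖x + ∑ n ∈ A, ε n • e n‖ ≤ Δ * ‖x + ∑ n ∈ B, δ n • e n‖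

section helpers

variable {f : ℕ → X →L[ℝ] ℝ} {e : ℕ → X}

lemma coeff_combo (hb : BasisSystem f e) (S : Finset ℕ) (c : ℕ → ℝ) (n : ℕ) :
    f n (∑ k ∈ S, c k • e k) = if n ∈ S then c n else 0 := by
  rw [map_sum]
  have h : ∀ k ∈ S, f n (c k • e k) = if k = n then c k else 0 := by
    intro k _
    rw [map_smul, hb.biorth n k, smul_eq_mul]
    by_cases h : n = k
    · simp [h]
    · simp [h, Ne.symm h]
  rw [Finset.sum_congr rfl h, Finset.sum_ite_eq' S n c]

lemma coeff_proj (hb : BasisSystem f e) (A : Finset ℕ) (x : X) (n : ℕ) :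
    f n (proj f e A x) = if n ∈ A then f n x else 0 :=
  coeff_combo hb A (fun k => f k x) n

lemma coeff_sub_proj (hb : BasisSystem f e) (I : Finset ℕ) (x : X) (n : ℕ) :
    f n (x - proj f e I x) = if n ∈ I then 0 else f n x := by
  rw [map_sub, coeff_proj hb]
  by_cases h : n ∈ I <;> simp [h]

lemma proj_empty (x : X) : proj f e ∅ x = 0 := by simp [proj]

lemma bddBelow_sigma_set (s : Set ℝ) (hs : ∀ r ∈ s, 0 ≤ r) : BddBelow s :=
  ⟨0, fun r hr => hs r hr⟩

lemma checkSigma_le (Λ I : Finset ℕ) (m : ℕ) (x : X)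
    (hI : I = ∅ ∨ ∃ a b : ℕ, a ≤ b ∧ I = Finset.Icc a b ∧ ∀ n ∈ Λ, n ≤ b)
    (hc : I.card ≤ m) :
    checkSigma f e Λ m x ≤ ‖x - proj f e I x‖ := by
  apply csInf_le
  · exact ⟨0, fun r hr => by obtain ⟨J, _, _, rfl⟩ := hr; positivity⟩
  · exact ⟨I, hI, hc, rfl⟩

lemma checkSigma_le_norm (Λ : Finset ℕ) (m : ℕ) (x : X) :
    checkSigma f e Λ m x ≤ ‖x‖ := by
  have := checkSigma_le (f := f) (e := e) Λ ∅ m x (Or.inl rfl) (by simp)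
  simpa [proj_empty] using this

end helpers
section helpers2

variable {f : ℕ → X →L[ℝ] ℝ} {e : ℕ → X}

lemma convex_coeff (w u : X) (c t : ℝ) (hc : |c| ≤ t) :
    ‖w + c • u‖ ≤ max ‖w + t • u‖ ‖w + (-t) • u‖ := by
  have ht : 0 ≤ t := le_trans (abs_nonneg c) hc
  rcases eq_or_lt_of_le ht with h0 | h0
  · have hc0 : c = 0 := by
      have : |c| ≤ 0 := by rw [h0]; exact hc
      exact abs_eq_zero.mp (le_antisymm this (abs_nonneg c))
    simp [← h0, hc0]
  · set θ := (t + c) / (2 * t) with hθdef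
    have hct : -t ≤ c := neg_le_of_abs_le hc
    have hct' : c ≤ t := le_of_abs_le hc
    have hθ0 : 0 ≤ θ := by
      apply div_nonneg <;> linarith
    have hθ1 : θ ≤ 1 := by
      rw [div_le_one (by linarith)]; linarith
    have hkey : w + c • u = θ • (w + t • u) + (1 - θ) • (w + (-t) • u) := by
      have h1 : θ * t - (1 - θ) * t = c := by
        field_simp [hθdef]
        rw [hθdef]; linear_combination (div_mul_cancel₀ (t + c) (ne_of_gt (by linarith) : (2*t) ≠ 0))
      have : c • u = (θ * t - (1 - θ) * t) • u := by rw [h1]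
      rw [this]
      module
    rw [hkey]
    calc ‖θ • (w + t • u) + (1 - θ) • (w + (-t) • u)‖
        ≤ ‖θ • (w + t • u)‖ + ‖(1 - θ) • (w + (-t) • u)‖ := norm_add_le _ _
      _ = θ * ‖w + t • u‖ + (1 - θ) * ‖w + (-t) • u‖ := by
          rw [norm_smul, norm_smul, Real.norm_eq_abs, Real.norm_eq_abs,
            abs_of_nonneg hθ0, abs_of_nonneg (by linarith)]
      _ ≤ θ * max ‖w + t • u‖ ‖w + (-t) • u‖ + (1 - θ) * max ‖w + t • u‖ ‖w + (-t) • u‖ :=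
          add_le_add (mul_le_mul_of_nonneg_left (le_max_left _ _) hθ0)
            (mul_le_mul_of_nonneg_left (le_max_right _ _) (by linarith))
      _ = max ‖w + t • u‖ ‖w + (-t) • u‖ := by ring

lemma sign_extremal (t : ℝ) (a : ℕ → ℝ) (E : Finset ℕ) :
    ∀ (v : X), (∀ n ∈ E, |a n| ≤ t) →
    ∃ ε : ℕ → ℝ, (∀ n, |ε n| = 1) ∧
      ‖v + ∑ n ∈ E, a n • e n‖ ≤ ‖v + ∑ n ∈ E, (t * ε n) • e n‖ := by
  induction E using Finset.induction_on with
  | empty => exact fun v _ => ⟨fun _ => 1, fun n => by norm_num, by simp⟩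
  | @insert k E' hk ih =>
    intro v ha
    obtain ⟨ε, hε, hle⟩ := ih (v + a k • e k) (fun n hn => ha n (Finset.mem_insert_of_mem hn))
    have h1 : ‖v + ∑ n ∈ insert k E', a n • e n‖
        ≤ ‖(v + ∑ n ∈ E', (t * ε n) • e n) + a k • e k‖ := by
      rw [Finset.sum_insert hk, show v + (a k • e k + ∑ n ∈ E', a n • e n)
        = (v + a k • e k) + ∑ n ∈ E', a n • e n by abel,
        show (v + ∑ n ∈ E', (t * ε n) • e n) + a k • e k
        = (v + a k • e k) + ∑ n ∈ E', (t * ε n) • e n by abel]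
      exact hle
    have h2 := convex_coeff (v + ∑ n ∈ E', (t * ε n) • e n) (e k) (a k) t
      (ha k (Finset.mem_insert_self k E'))
    have hsum : ∀ s : ℝ, ∑ n ∈ insert k E', (t * Function.update ε k s n) • e n
        = (t * s) • e k + ∑ n ∈ E', (t * ε n) • e n := by
      intro s
      rw [Finset.sum_insert hk, Function.update_self]
      congr 1
      apply Finset.sum_congr rfl
      intro n hn
      have hnk : n ≠ k := fun h => hk (h ▸ hn)
      rw [Function.update_of_ne hnk]
    rcases le_max_iff.mp (le_refl (max ‖(v + ∑ n ∈ E', (t * ε n) • e n) + t • e k‖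
        ‖(v + ∑ n ∈ E', (t * ε n) • e n) + (-t) • e k‖)) with hmx | hmx
    · refine ⟨Function.update ε k 1, ?_, ?_⟩
      · intro n
        by_cases h : n = k
        · subst h; rw [Function.update_self]; norm_num
        · rw [Function.update_of_ne h]; exact hε n
      · rw [hsum 1]
        calc ‖v + ∑ n ∈ insert k E', a n • e n‖
            ≤ _ := h1.trans (h2.trans hmx)
          _ = ‖v + ((t * 1) • e k + ∑ n ∈ E', (t * ε n) • e n)‖ := by
              rw [mul_one]; congr 1; abel
    · refine ⟨Function.update ε k (-1), ?_, ?_⟩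
      · intro n
        by_cases h : n = k
        · subst h; rw [Function.update_self]; norm_num
        · rw [Function.update_of_ne h]; exact hε n
      · rw [hsum (-1)]
        calc ‖v + ∑ n ∈ insert k E', a n • e n‖
            ≤ _ := h1.trans (h2.trans hmx)
          _ = ‖v + ((t * (-1)) • e k + ∑ n ∈ E', (t * ε n) • e n)‖ := by
              rw [show t * (-1) = -t by ring]; congr 1; abel

end helpers2
section helpers3

variable {f : ℕ → X →L[ℝ] ℝ} {e : ℕ → X}

lemma flatten_aux {Cq : ℝ} (hCq : 0 ≤ Cq) (hq : QG f e Cq) (v : X) :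
    ∀ (k : ℕ) (Γ : Finset ℕ), Γ.card ≤ k → GreedySet f v Γ → ∀ a : ℝ, 0 < a →
      (∀ n ∈ Γ, a ≤ |f n v|) → (Γ = ∅ ∨ ∃ n₀ ∈ Γ, |f n₀ v| = a) →
      ‖(∑ n ∈ Γ, (a * (if f n v < 0 then (-1:ℝ) else 1)) • e n) - proj f e Γ v‖ ≤ Cq * ‖v‖ := by
  intro k
  induction k with
  | zero =>
    intro Γ hcard _ a _ _ _
    have : Γ = ∅ := Finset.card_eq_zero.mp (Nat.le_zero.mp hcard)
    subst this
    simp [proj_empty]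
    positivity
  | succ k ih =>
    intro Γ hcard hg a ha hlow hatt
    rcases Γ.eq_empty_or_nonempty with rfl | hne
    · simp [proj_empty]; positivity
    obtain ⟨n₀, hn₀, hmin⟩ := Γ.exists_min_image (fun n => |f n v|) hne
    obtain ⟨n', hn', he'⟩ := hatt.resolve_left (Finset.nonempty_iff_ne_empty.mp hne)
    have ha₀ : |f n₀ v| = a := le_antisymm (he' ▸ hmin n' hn') (hlow n₀ hn₀)
    set Γ' := Γ.erase n₀ with hΓ'
    have hg' : GreedySet f v Γ' := by
      intro n hn m hm
      by_cases hmn : m = n₀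
      · subst hmn
        rw [ha₀]
        exact hlow n (Finset.mem_of_mem_erase hn)
      · exact hg n (Finset.mem_of_mem_erase hn) m
          (fun h => hm (Finset.mem_erase.mpr ⟨hmn, h⟩))
    have hsgn0 : (a * (if f n₀ v < 0 then (-1:ℝ) else 1)) • e n₀ = f n₀ v • e n₀ := by
      rcases lt_or_ge (f n₀ v) 0 with hneg | hpos
    -- f n₀ v = -a
      · rw [if_pos hneg]
        have : f n₀ v = -a := by
          rw [← ha₀, abs_of_neg hneg]; ring
        rw [this]; ring_nf
      · rw [if_neg (not_lt.mpr hpos)]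
        have : f n₀ v = a := by rw [← ha₀, abs_of_nonneg hpos]
        rw [this]; ring_nf
    have hid : (∑ n ∈ Γ, (a * (if f n v < 0 then (-1:ℝ) else 1)) • e n) - proj f e Γ v
        = (∑ n ∈ Γ', (a * (if f n v < 0 then (-1:ℝ) else 1)) • e n) - proj f e Γ' v := by
      rw [proj, proj, ← Finset.add_sum_erase _ _ hn₀, ← Finset.add_sum_erase _ (fun n => f n v • e n) hn₀,
        hsgn0]
      abel
    rcases Γ'.eq_empty_or_nonempty with h' | h'
    · rw [hid, h']
      simp [proj_empty]
      positivity
    · obtain ⟨n₁, hn₁, hmin₁⟩ := Γ'.exists_min_image (fun n => |f n v|) h'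
      set a' := |f n₁ v| with ha'def
      have haa' : a ≤ a' := hlow n₁ (Finset.mem_of_mem_erase hn₁)
      have ha' : (0:ℝ) < a' := lt_of_lt_of_le ha haa'
      have hcard' : Γ'.card ≤ k := by
        rw [hΓ', Finset.card_erase_of_mem hn₀]
        have := Finset.card_pos.mpr hne
        omega
      have hIH := ih Γ' hcard' hg' a' ha' (fun n hn => hmin₁ n hn) (Or.inr ⟨n₁, hn₁, rfl⟩)
      have hP : ‖proj f e Γ' v‖ ≤ Cq * ‖v‖ := hq v Γ' hg'
      have hscale : (∑ n ∈ Γ', (a * (if f n v < 0 then (-1:ℝ) else 1)) • e n)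
          = (a/a') • (∑ n ∈ Γ', (a' * (if f n v < 0 then (-1:ℝ) else 1)) • e n) := by
        rw [Finset.smul_sum]
        apply Finset.sum_congr rfl
        intro n _
        rw [smul_smul]
        congr 1
        field_simp
      have hcomb : (∑ n ∈ Γ', (a * (if f n v < 0 then (-1:ℝ) else 1)) • e n) - proj f e Γ' v
          = (a/a') • ((∑ n ∈ Γ', (a' * (if f n v < 0 then (-1:ℝ) else 1)) • e n) - proj f e Γ' v)
            + ((a/a') - 1) • proj f e Γ' v := by
        rw [hscale]; module
      have h1 : 0 ≤ a/a' := le_of_lt (div_pos ha ha')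
      have h2 : a/a' ≤ 1 := (div_le_one ha').mpr haa'
      rw [hid, hcomb]
      calc ‖_ + _‖ ≤ ‖(a/a') • ((∑ n ∈ Γ', (a' * (if f n v < 0 then (-1:ℝ) else 1)) • e n)
              - proj f e Γ' v)‖ + ‖((a/a') - 1) • proj f e Γ' v‖ := norm_add_le _ _
        _ ≤ (a/a') * (Cq * ‖v‖) + (1 - (a/a')) * (Cq * ‖v‖) := by
            rw [norm_smul, norm_smul, Real.norm_eq_abs, Real.norm_eq_abs,
              abs_of_nonneg h1, abs_of_nonpos (by linarith : (a/a') - 1 ≤ 0)]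
            have : -((a/a') - 1) = 1 - (a/a') := by ring
            rw [this]
            exact add_le_add (mul_le_mul_of_nonneg_left hIH h1)
              (mul_le_mul_of_nonneg_left hP (by linarith))
        _ = Cq * ‖v‖ := by ring

lemma flatten {Cq : ℝ} (hCq : 0 ≤ Cq) (hq : QG f e Cq) (v : X) (Γ : Finset ℕ)
    (hg : GreedySet f v Γ) (t : ℝ) (ht : 0 < t) (hlow : ∀ n ∈ Γ, t ≤ |f n v|) :
    ‖∑ n ∈ Γ, (t * (if f n v < 0 then (-1:ℝ) else 1)) • e n‖ ≤ 2 * Cq * ‖v‖ := by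
  rcases Γ.eq_empty_or_nonempty with rfl | hne
  · simp; positivity
  obtain ⟨n₀, hn₀, hmin⟩ := Γ.exists_min_image (fun n => |f n v|) hne
  set a := |f n₀ v| with hadef
  have hta : t ≤ a := hlow n₀ hn₀
  have ha : (0:ℝ) < a := lt_of_lt_of_le ht hta
  have haux := flatten_aux hCq hq v Γ.card Γ le_rfl hg a ha (fun n hn => hmin n hn)
    (Or.inr ⟨n₀, hn₀, rfl⟩)
  have hP : ‖proj f e Γ v‖ ≤ Cq * ‖v‖ := hq v Γ hg
  have hscale : (∑ n ∈ Γ, (t * (if f n v < 0 then (-1:ℝ) else 1)) • e n)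
      = (t/a) • (∑ n ∈ Γ, (a * (if f n v < 0 then (-1:ℝ) else 1)) • e n) := by
    rw [Finset.smul_sum]
    apply Finset.sum_congr rfl
    intro n _
    rw [smul_smul]
    congr 1
    field_simp
  have h1 : 0 ≤ t/a := le_of_lt (div_pos ht ha)
  have h2 : t/a ≤ 1 := (div_le_one ha).mpr hta
  rw [hscale]
  rw [norm_smul, Real.norm_eq_abs, abs_of_nonneg h1]
  have hn : ‖∑ n ∈ Γ, (a * (if f n v < 0 then (-1:ℝ) else 1)) • e n‖ ≤ 2 * (Cq * ‖v‖) := by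
    calc ‖∑ n ∈ Γ, (a * (if f n v < 0 then (-1:ℝ) else 1)) • e n‖
        ≤ ‖(∑ n ∈ Γ, (a * (if f n v < 0 then (-1:ℝ) else 1)) • e n) - proj f e Γ v‖
          + ‖proj f e Γ v‖ := by
            have h : (∑ n ∈ Γ, (a * (if f n v < 0 then (-1:ℝ) else 1)) • e n)
                = ((∑ n ∈ Γ, (a * (if f n v < 0 then (-1:ℝ) else 1)) • e n) - proj f e Γ v)
                  + proj f e Γ v := by abel
            nth_rewrite 1 [h]
            exact norm_add_le _ _
      _ ≤ Cq * ‖v‖ + Cq * ‖v‖ := add_le_add haux hP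
      _ = 2 * (Cq * ‖v‖) := by ring
  calc (t/a) * ‖∑ n ∈ Γ, (a * (if f n v < 0 then (-1:ℝ) else 1)) • e n‖
      ≤ 1 * (2 * (Cq * ‖v‖)) := by
        apply mul_le_mul h2 hn (norm_nonneg _) (by norm_num)
    _ = 2 * Cq * ‖v‖ := by ring

end helpers3
section fwd

variable {f : ℕ → X →L[ℝ] ℝ} {e : ℕ → X}

lemma fwd_qg (hb : BasisSystem f e) {l C : ℝ} (hl : 1 ≤ l) (hC : 1 ≤ C)
    (hR : RPGII f e l C) : ∃ Cq : ℝ, 1 ≤ Cq ∧ QG f e Cq := by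
  obtain ⟨c₁, c₂, hc₁, hc⟩ := hb.bounded
  have hc₂ : 0 < c₂ := lt_of_lt_of_le hc₁ (le_trans (hc 0).1 (hc 0).2.1)
  set Cs := C * (1 + 2*c₂^2*l) + c₂^2*l with hCs
  have hCs1 : 1 ≤ Cs := by
    have h1 : 0 ≤ c₂^2*l := by positivity
    nlinarith
  refine ⟨Cs + 1, by linarith, ?_⟩
  intro x Λ hg
  rcases Λ.eq_empty_or_nonempty with rfl | hne
  · rw [proj_empty, norm_zero]
    positivity
  have hbound : ∀ n, |f n x| ≤ c₂ * ‖x‖ := by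
    intro n
    calc |f n x| = ‖f n x‖ := rfl
      _ ≤ ‖f n‖ * ‖x‖ := (f n).le_opNorm x
      _ ≤ c₂ * ‖x‖ := mul_le_mul_of_nonneg_right (hc n).2.2 (norm_nonneg x)
  have hsupp : ‖x - proj f e Λ x‖ ≤ Cs * ‖x‖ := by
    set k := Λ.card with hk
    have hk1 : 1 ≤ k := Finset.card_pos.mpr hne
    have hex : ∃ m : ℕ, k ≤ ⌈l * (m:ℝ)⌉₊ := by
      refine ⟨k, ?_⟩
      have h1 : (k:ℝ) ≤ l * (k:ℝ) := by nlinarith [Nat.cast_nonneg (α := ℝ) k]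
      calc k = ⌈(k:ℝ)⌉₊ := (Nat.ceil_natCast k).symm
        _ ≤ ⌈l * (k:ℝ)⌉₊ := Nat.ceil_le_ceil h1
    set m := Nat.find hex with hm
    have hmspec : k ≤ ⌈l * (m:ℝ)⌉₊ := Nat.find_spec hex
    have hm1 : 1 ≤ m := by
      rcases Nat.eq_zero_or_pos m with h0 | h0
      · exfalso
        rw [h0] at hmspec
        simp at hmspec
        omega
      · exact h0
    have hmin : ⌈l * ((m-1:ℕ):ℝ)⌉₊ < k := by
      have h := Nat.find_min hex (show m - 1 < m by omega)
      omega
    set N := ⌈l * (m:ℝ)⌉₊ with hN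
    set d := N - k with hd
    have hdl : (d:ℝ) ≤ l := by
      have h1 : (N:ℝ) < l * (m:ℝ) + 1 := Nat.ceil_lt_add_one (by positivity)
      have h2 : l * ((m-1:ℕ):ℝ) ≤ (⌈l * ((m-1:ℕ):ℝ)⌉₊:ℝ) := Nat.le_ceil _
      have h3 : ((m-1:ℕ):ℝ) = (m:ℝ) - 1 := by
        rw [Nat.cast_sub hm1, Nat.cast_one]
      have h4 : (⌈l * ((m-1:ℕ):ℝ)⌉₊:ℝ) + 1 ≤ (k:ℝ) := by exact_mod_cast hmin
      have h5 : (d:ℝ) = (N:ℝ) - (k:ℝ) := by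
        rw [hd, Nat.cast_sub hmspec]
      rw [h3] at h2 h4
      rw [h5]
      linarith
    set M := Λ.max' hne with hM
    set B := Finset.Icc (M+1) (M+d) with hB
    have hBcard : B.card = d := by rw [hB, Nat.card_Icc]; omega
    have hdisj : Disjoint Λ B := by
      rw [Finset.disjoint_left]
      intro n hn hnB
      have h1 : n ≤ M := Λ.le_max' n hn
      rw [hB, Finset.mem_Icc] at hnB
      omega
    set t := 2 * c₂ * ‖x‖ with ht
    have ht0 : 0 ≤ t := by positivity
    set z := x + ∑ b ∈ B, t • e b with hz
    have hcoe : ∀ n, f n z = f n x + (if n ∈ B then t else 0) := by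
      intro n
      rw [hz, map_add, coeff_combo hb B (fun _ => t) n]
    have hgz : GreedySet f z (Λ ∪ B) := by
      intro n hn mm hmm
      rw [Finset.mem_union] at hn
      have hmm' : mm ∉ Λ := fun h => hmm (Finset.mem_union_left _ h)
      have hmmB : mm ∉ B := fun h => hmm (Finset.mem_union_right _ h)
      have hfmm : f mm z = f mm x := by rw [hcoe, if_neg hmmB, add_zero]
      rcases hn with hnΛ | hnB
      · have hfn : f n z = f n x := by
          rw [hcoe, if_neg (Finset.disjoint_left.mp hdisj hnΛ), add_zero]
        rw [hfmm, hfn]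
        exact hg n hnΛ mm hmm'
      · rw [hfmm, hcoe n, if_pos hnB]
        have h1 := hbound n
        have h2 := hbound mm
        have hnx := neg_abs_le (f n x)
        have hpos : (0:ℝ) ≤ f n x + t := by rw [ht]; linarith
        rw [abs_of_nonneg hpos]
        linarith
    have hcard : (Λ ∪ B).card = ⌈l * (m:ℝ)⌉₊ := by
      rw [Finset.card_union_of_disjoint hdisj, hBcard, ← hk, ← hN]
      omega
    have hmain := hR z m (Λ ∪ B) hcard hgz
    have hsig : checkSigma f e (Λ ∪ B) m z ≤ ‖z‖ := checkSigma_le_norm _ _ _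
    have hid : z - proj f e (Λ ∪ B) z = x - proj f e Λ x - proj f e B x := by
      rw [proj, hz]
      have hterm : ∀ n ∈ Λ ∪ B, f n z • e n = f n x • e n + (if n ∈ B then t • e n else 0) := by
        intro n _
        rw [hcoe n]
        by_cases h : n ∈ B <;> simp [h, add_smul]
      rw [Finset.sum_congr rfl hterm, Finset.sum_add_distrib, Finset.sum_ite_mem,
        Finset.union_inter_cancel_right, Finset.sum_union hdisj]
      rw [proj, proj]
      abel
    have hPB : ‖proj f e B x‖ ≤ (d:ℝ) * (c₂ * ‖x‖ * c₂) := by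
      rw [proj]
      calc ‖∑ n ∈ B, f n x • e n‖ ≤ ∑ n ∈ B, ‖f n x • e n‖ := norm_sum_le _ _
        _ ≤ ∑ _n ∈ B, c₂ * ‖x‖ * c₂ := by
            apply Finset.sum_le_sum
            intro n _
            rw [norm_smul, Real.norm_eq_abs]
            exact mul_le_mul (hbound n) (hc n).2.1 (norm_nonneg _) (by positivity)
        _ = (B.card : ℝ) * (c₂ * ‖x‖ * c₂) := by rw [Finset.sum_const, nsmul_eq_mul]
        _ = (d:ℝ) * (c₂ * ‖x‖ * c₂) := by rw [hBcard]
    have hznorm : ‖z‖ ≤ ‖x‖ + (d:ℝ) * (t * c₂) := by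
      rw [hz]
      calc ‖x + ∑ b ∈ B, t • e b‖ ≤ ‖x‖ + ‖∑ b ∈ B, t • e b‖ := norm_add_le _ _
        _ ≤ ‖x‖ + ∑ b ∈ B, ‖t • e b‖ := by
            have := norm_sum_le B (fun b => t • e b)
            linarith
        _ ≤ ‖x‖ + ∑ _b ∈ B, t * c₂ := by
            have : ∑ b ∈ B, ‖t • e b‖ ≤ ∑ _b ∈ B, t * c₂ := by
              apply Finset.sum_le_sum
              intro b _
              rw [norm_smul, Real.norm_eq_abs, abs_of_nonneg ht0]
              exact mul_le_mul_of_nonneg_left (hc b).2.1 ht0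
            linarith
        _ = ‖x‖ + (d:ℝ) * (t * c₂) := by rw [Finset.sum_const, nsmul_eq_mul, hBcard]
    have hstep : ‖x - proj f e Λ x‖ ≤ C * ‖z‖ + (d:ℝ) * (c₂ * ‖x‖ * c₂) := by
      have heq : x - proj f e Λ x = (z - proj f e (Λ ∪ B) z) + proj f e B x := by
        rw [hid]; abel
      rw [heq]
      calc ‖(z - proj f e (Λ ∪ B) z) + proj f e B x‖
          ≤ ‖z - proj f e (Λ ∪ B) z‖ + ‖proj f e B x‖ := norm_add_le _ _
        _ ≤ C * ‖z‖ + (d:ℝ) * (c₂ * ‖x‖ * c₂) := by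
            have h1 : ‖z - proj f e (Λ ∪ B) z‖ ≤ C * ‖z‖ := by
              calc ‖z - proj f e (Λ ∪ B) z‖ ≤ C * checkSigma f e (Λ ∪ B) m z := hmain
                _ ≤ C * ‖z‖ := mul_le_mul_of_nonneg_left hsig (by linarith)
            linarith
    have hd0 : (0:ℝ) ≤ (d:ℝ) := Nat.cast_nonneg d
    have hx0 := norm_nonneg x
    calc ‖x - proj f e Λ x‖ ≤ C * ‖z‖ + (d:ℝ) * (c₂ * ‖x‖ * c₂) := hstep
      _ ≤ C * (‖x‖ + (d:ℝ) * (t * c₂)) + (d:ℝ) * (c₂ * ‖x‖ * c₂) := by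
          have := mul_le_mul_of_nonneg_left hznorm (show (0:ℝ) ≤ C by linarith)
          linarith
      _ ≤ Cs * ‖x‖ := by
          rw [hCs, ht]
          have h6 : 0 ≤ (l - (d:ℝ)) * (c₂ * c₂ * ‖x‖) :=
            mul_nonneg (sub_nonneg.mpr hdl) (mul_nonneg (mul_nonneg hc₂.le hc₂.le) hx0)
          have h7 : 0 ≤ C * ((l - (d:ℝ)) * (c₂ * c₂ * ‖x‖)) :=
            mul_nonneg (by linarith) h6
          nlinarith [h6, h7]
  calc ‖proj f e Λ x‖ = ‖x - (x - proj f e Λ x)‖ := by congr 1; abel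
    _ ≤ ‖x‖ + ‖x - proj f e Λ x‖ := norm_sub_le _ _
    _ ≤ (Cs + 1) * ‖x‖ := by linarith

end fwd
section fwd2

variable {f : ℕ → X →L[ℝ] ℝ} {e : ℕ → X}

lemma fwd_rpslc (hb : BasisSystem f e) {l C Cq : ℝ} (hl : 1 ≤ l) (hC : 1 ≤ C) (hCq : 1 ≤ Cq)
    (hR : RPGII f e l C) (hq : QG f e Cq) : RPSLC f e l ((C+1)*(1+Cq)) := by
  intro x hx ε δ hε hδ A B hcardH hBsupp hBA hsurr
  rcases A.eq_empty_or_nonempty with rfl | hA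
  · rw [Finset.sum_empty, add_zero]
    set v := x + ∑ n ∈ B, δ n • e n with hv
    have hcv : ∀ n, f n v = f n x + (if n ∈ B then δ n else 0) := by
      intro n
      rw [hv, map_add, coeff_combo hb B δ n]
    have hgv : GreedySet f v B := by
      intro n hn m hm
      have h1 : f n v = δ n := by rw [hcv, if_pos hn, hBsupp n hn, zero_add]
      have h2 : f m v = f m x := by rw [hcv, if_neg hm, add_zero]
      rw [h1, h2, hδ n]
      exact hx m
    have hproj : proj f e B v = ∑ n ∈ B, δ n • e n := by
      rw [proj]
      apply Finset.sum_congr rfl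
      intro n hn
      rw [hcv, if_pos hn, hBsupp n hn, zero_add]
    have hP : ‖proj f e B v‖ ≤ Cq * ‖v‖ := hq v B hgv
    have hxid : x = v - proj f e B v := by rw [hproj, hv]; abel
    have hv0 := norm_nonneg v
    calc ‖x‖ = ‖v - proj f e B v‖ := by rw [← hxid]
      _ ≤ ‖v‖ + ‖proj f e B v‖ := norm_sub_le _ _
      _ ≤ (1 + Cq) * ‖v‖ := by linarith
      _ ≤ (C+1)*(1+Cq) * ‖v‖ := by
          nlinarith [mul_nonneg (show (0:ℝ) ≤ C by linarith)
            (mul_nonneg (show (0:ℝ) ≤ 1+Cq by linarith) hv0)]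
  · set a₀ := A.min' hA with ha₀
    set b₀ := A.max' hA with hb₀
    have hab : a₀ ≤ b₀ := A.min'_le (A.max' hA) (A.max'_mem hA)
    set Ic := Finset.Icc a₀ b₀ with hIc
    have hAIc : A ⊆ Ic := by
      intro n hn
      rw [hIc, Finset.mem_Icc]
      exact ⟨A.min'_le n hn, A.le_max' n hn⟩
    set s := spread A with hs
    have hspread : s = b₀ - a₀ + 1 := by rw [hs, spread, dif_pos hA]
    have hIccard : Ic.card = s := by rw [hIc, Nat.card_Icc, hspread]; omega
    set G := Ic \ A with hG
    have hAcard : A.card ≤ s := by rw [← hIccard]; exact Finset.card_le_card hAIc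
    have hGcard : G.card = s - A.card := by rw [hG, Finset.card_sdiff_of_subset hAIc, hIccard]
    have hsurr' : ∀ n ∈ Ic, f n x = 0 := by
      intro n hn
      rw [hIc, Finset.mem_Icc] at hn
      exact hsurr a₀ (A.min'_mem hA) b₀ (A.max'_mem hA) n hn.1 hn.2
    have hBlt : ∀ b' ∈ B, b' < a₀ := fun b' hb' => hBA b' hb' a₀ (A.min'_mem hA)
    have hsl0 : (0:ℝ) ≤ (l-1) * (s:ℝ) := by
      apply mul_nonneg (by linarith) (Nat.cast_nonneg s)
    have hABcard : A.card ≤ B.card := by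
      have : (A.card:ℝ) ≤ (B.card:ℝ) := by rw [hs] at hsl0; linarith [hcardH]
      exact_mod_cast this
    have hn'B : ⌈(l-1)*(s:ℝ)⌉₊ + A.card ≤ B.card := by
      have h1 : (l-1)*(s:ℝ) ≤ (B.card:ℝ) - (A.card:ℝ) := by
        rw [hs]; linarith [hcardH]
      have h2 : ((B.card - A.card : ℕ):ℝ) = (B.card:ℝ) - (A.card:ℝ) := Nat.cast_sub hABcard
      have h3 : ⌈(l-1)*(s:ℝ)⌉₊ ≤ B.card - A.card := Nat.ceil_le.mpr (by rw [h2]; exact h1)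
      omega
    obtain ⟨B', hB'B, hB'card⟩ := Finset.exists_subset_card_eq hn'B
    have hB'lt : ∀ n ∈ B', n < a₀ := fun n hn => hBlt n (hB'B hn)
    have hB'A : ∀ n ∈ B', n ∉ A := by
      intro n hn hnA
      exact absurd (A.min'_le n hnA) (not_le.mpr (hB'lt n hn))
    have hB'Ic : ∀ n ∈ B', n ∉ Ic := by
      intro n hn hnIc
      rw [hIc, Finset.mem_Icc] at hnIc
      exact absurd hnIc.1 (not_le.mpr (hB'lt n hn))
    set c : ℕ → ℝ := fun n => if n ∈ A then ε n else if n ∈ Ic then 1 else δ n with hc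
    set S := Ic ∪ B' with hS
    set u := x + ∑ n ∈ S, c n • e n with hu
    have hcu : ∀ n, f n u = f n x + (if n ∈ S then c n else 0) := by
      intro n
      rw [hu, map_add, coeff_combo hb S c n]
    have hfu1 : ∀ n ∈ S, f n u = c n := by
      intro n hn
      have hfx : f n x = 0 := by
        rcases Finset.mem_union.mp hn with h | h
        · exact hsurr' n h
        · exact hBsupp n (hB'B h)
      rw [hcu, if_pos hn, hfx, zero_add]
    have habs : ∀ n, |f n u| ≤ 1 := by
      intro n
      by_cases hn : n ∈ S
      · rw [hfu1 n hn]
        simp only [hc]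
        by_cases h1 : n ∈ A
        · rw [if_pos h1, hε n]
        · rw [if_neg h1]
          by_cases h2 : n ∈ Ic
          · rw [if_pos h2]; norm_num
          · rw [if_neg h2, hδ n]
      · rw [hcu, if_neg hn, add_zero]
        exact hx n
    set Λu := B' ∪ G with hΛu
    have hΛuS : Λu ⊆ S := by
      rw [hΛu, hS]
      apply Finset.union_subset
      · exact Finset.subset_union_right
      · exact (Finset.sdiff_subset).trans Finset.subset_union_left
    have hΛu1 : ∀ n ∈ Λu, |f n u| = 1 := by
      intro n hn
      rw [hfu1 n (hΛuS hn)]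
      simp only [hc]
      rcases Finset.mem_union.mp hn with h | h
      · rw [if_neg (hB'A n h), if_neg (hB'Ic n h), hδ n]
      · rw [hG, Finset.mem_sdiff] at h
        rw [if_neg h.2, if_pos h.1]
        norm_num
    have hgu : GreedySet f u Λu := by
      intro n hn m _
      rw [hΛu1 n hn]
      exact habs m
    have hdisjBG : Disjoint B' G := by
      rw [Finset.disjoint_left]
      intro n hn hnG
      rw [hG, Finset.mem_sdiff] at hnG
      exact hB'Ic n hn hnG.1
    have hΛucard : Λu.card = ⌈l * ((s:ℕ):ℝ)⌉₊ := by
      have hceil : ⌈l * ((s:ℕ):ℝ)⌉₊ = ⌈(l-1) * (s:ℝ)⌉₊ + s := by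
        have h1 : l * ((s:ℕ):ℝ) = (l-1) * (s:ℝ) + (s:ℕ) := by ring
        rw [h1, Nat.ceil_add_natCast hsl0]
      rw [hΛu, Finset.card_union_of_disjoint hdisjBG, hB'card, hGcard, hceil]
      omega
    have hmain := hR u s Λu hΛucard hgu
    have hid1 : u - proj f e Λu u = x + ∑ n ∈ A, ε n • e n := by
      have hprojΛu : proj f e Λu u = ∑ n ∈ Λu, c n • e n := by
        rw [proj]
        exact Finset.sum_congr rfl (fun n hn => by rw [hfu1 n (hΛuS hn)])
      have hsplit : ∑ n ∈ S, c n • e n = ∑ n ∈ S \ Λu, c n • e n + ∑ n ∈ Λu, c n • e n :=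
        (Finset.sum_sdiff hΛuS).symm
      have hSdiff : S \ Λu = A := by
        ext n
        simp only [hS, hΛu, hG, Finset.mem_sdiff, Finset.mem_union, not_or]
        constructor
        · rintro ⟨h1 | h1, hnB', hnG⟩
          · by_contra hnA
            exact hnG ⟨h1, hnA⟩
          · exact absurd h1 hnB'
        · intro hnA
          exact ⟨Or.inl (hAIc hnA), fun h => hB'A n h hnA, fun h => h.2 hnA⟩
      have hA' : ∑ n ∈ A, c n • e n = ∑ n ∈ A, ε n • e n := by
        apply Finset.sum_congr rfl
        intro n hn
        simp only [hc]
        rw [if_pos hn]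
      rw [hu, hprojΛu, hsplit, hSdiff, hA']
      abel
    have hIcsub : Ic ⊆ S := Finset.subset_union_left
    have hid2 : u - proj f e Ic u = x + ∑ n ∈ B', δ n • e n := by
      have hprojIc : proj f e Ic u = ∑ n ∈ Ic, c n • e n := by
        rw [proj]
        exact Finset.sum_congr rfl (fun n hn => by rw [hfu1 n (hIcsub hn)])
      have hsplit : ∑ n ∈ S, c n • e n = ∑ n ∈ S \ Ic, c n • e n + ∑ n ∈ Ic, c n • e n :=
        (Finset.sum_sdiff hIcsub).symm
      have hSdiff : S \ Ic = B' := by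
        ext n
        simp only [hS, Finset.mem_sdiff, Finset.mem_union]
        constructor
        · rintro ⟨h1 | h1, h2⟩
          · exact absurd h1 h2
          · exact h1
        · exact fun h => ⟨Or.inr h, hB'Ic n h⟩
      have hB'' : ∑ n ∈ B', c n • e n = ∑ n ∈ B', δ n • e n := by
        apply Finset.sum_congr rfl
        intro n hn
        simp only [hc]
        rw [if_neg (hB'A n hn), if_neg (hB'Ic n hn)]
      rw [hu, hprojIc, hsplit, hSdiff, hB'']
      abel
    have hsig : checkSigma f e Λu s u ≤ ‖u - proj f e Ic u‖ := by
      apply checkSigma_le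
      · refine Or.inr ⟨a₀, b₀, hab, hIc, ?_⟩
        intro n hn
        rcases Finset.mem_union.mp hn with h | h
        · exact le_of_lt (lt_of_lt_of_le (hB'lt n h) hab)
        · have := (Finset.sdiff_subset : Ic \ A ⊆ Ic) h
          rw [hIc, Finset.mem_Icc] at this
          exact this.2
      · rw [hIccard]
    set v := x + ∑ n ∈ B, δ n • e n with hv
    have hcv : ∀ n, f n v = f n x + (if n ∈ B then δ n else 0) := by
      intro n
      rw [hv, map_add, coeff_combo hb B δ n]
    set Γv := B \ B' with hΓv
    have hgv : GreedySet f v Γv := by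
      intro n hn m hm
      have hnB : n ∈ B := (Finset.sdiff_subset) hn
      have h1 : f n v = δ n := by rw [hcv, if_pos hnB, hBsupp n hnB, zero_add]
      rw [h1, hδ n]
      by_cases hmB : m ∈ B
      · have : f m v = δ m := by rw [hcv, if_pos hmB, hBsupp m hmB, zero_add]
        rw [this, hδ m]
      · have : f m v = f m x := by rw [hcv, if_neg hmB, add_zero]
        rw [this]
        exact hx m
    have hprojΓv : proj f e Γv v = ∑ n ∈ Γv, δ n • e n := by
      rw [proj]
      apply Finset.sum_congr rfl
      intro n hn
      have hnB : n ∈ B := (Finset.sdiff_subset) hn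
      rw [hcv, if_pos hnB, hBsupp n hnB, zero_add]
    have hvid : v - proj f e Γv v = x + ∑ n ∈ B', δ n • e n := by
      have hsplit : ∑ n ∈ B, δ n • e n = ∑ n ∈ B \ B', δ n • e n + ∑ n ∈ B', δ n • e n :=
        (Finset.sum_sdiff hB'B).symm
      rw [hv, hprojΓv, hΓv, hsplit]
      abel
    have hPv : ‖proj f e Γv v‖ ≤ Cq * ‖v‖ := hq v Γv hgv
    have hlast : ‖x + ∑ n ∈ B', δ n • e n‖ ≤ (1 + Cq) * ‖v‖ := by
      rw [← hvid]
      calc ‖v - proj f e Γv v‖ ≤ ‖v‖ + ‖proj f e Γv v‖ := norm_sub_le _ _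
        _ ≤ (1 + Cq) * ‖v‖ := by linarith
    have hv0 := norm_nonneg v
    have hC0 : (0:ℝ) ≤ C := by linarith
    calc ‖x + ∑ n ∈ A, ε n • e n‖ = ‖u - proj f e Λu u‖ := by rw [hid1]
      _ ≤ C * checkSigma f e Λu s u := hmain
      _ ≤ C * ‖u - proj f e Ic u‖ := mul_le_mul_of_nonneg_left hsig hC0
      _ = C * ‖x + ∑ n ∈ B', δ n • e n‖ := by rw [hid2]
      _ ≤ C * ((1 + Cq) * ‖v‖) := mul_le_mul_of_nonneg_left hlast hC0
      _ ≤ (C+1)*(1+Cq) * ‖v‖ := by nlinarith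

end fwd2
section bwd

variable {f : ℕ → X →L[ℝ] ℝ} {e : ℕ → X}

lemma bwd_key (hb : BasisSystem f e) {l Cq Δ : ℝ} (hl : 1 ≤ l) (hCq : 1 ≤ Cq) (hΔ : 1 ≤ Δ)
    (hq : QG f e Cq) (hsl : RPSLC f e l Δ) (x : X) (m : ℕ) (Λ : Finset ℕ)
    (hcard : Λ.card = ⌈l * (m:ℝ)⌉₊) (hg : GreedySet f x Λ) (I : Finset ℕ)
    (hIopt : I = ∅ ∨ ∃ a b : ℕ, a ≤ b ∧ I = Finset.Icc a b ∧ ∀ n ∈ Λ, n ≤ b)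
    (hIm : I.card ≤ m) :
    ‖x - proj f e Λ x‖ ≤ (2 + 2*Cq + Δ*(1+3*Cq)) * ‖x - proj f e I x‖ := by
  have hx0 := norm_nonneg x
  rcases hIopt with rfl | ⟨a, b, hab, hIdef, hmax⟩
  · rw [proj_empty, sub_zero]
    have h1 : ‖proj f e Λ x‖ ≤ Cq * ‖x‖ := hq x Λ hg
    calc ‖x - proj f e Λ x‖ ≤ ‖x‖ + ‖proj f e Λ x‖ := norm_sub_le _ _
      _ ≤ (2 + 2*Cq + Δ*(1+3*Cq)) * ‖x‖ := by
          have e1 : 0 ≤ (1+Cq)*‖x‖ := mul_nonneg (by linarith) hx0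
          have e2 : 0 ≤ Δ*((1+3*Cq)*‖x‖) :=
            mul_nonneg (by linarith) (mul_nonneg (by linarith) hx0)
          nlinarith [h1, e1, e2]
  rcases Λ.eq_empty_or_nonempty with rfl | hΛne
  · exfalso
    have h0 : ⌈l * (m:ℝ)⌉₊ = 0 := by rw [← hcard]; simp
    have hm0 : m = 0 := by
      by_contra hm0
      have hm1 : (1:ℝ) ≤ (m:ℝ) := by exact_mod_cast Nat.one_le_iff_ne_zero.mpr hm0
      have h2 : (0:ℝ) < l * m := by nlinarith
      have := Nat.ceil_pos.mpr h2
      omega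
    rw [hm0] at hIm
    rw [hIdef, Nat.card_Icc] at hIm
    omega
  obtain ⟨n₀, hn₀, hmin⟩ := Λ.exists_min_image (fun n => |f n x|) hΛne
  set t := |f n₀ x| with htdef
  set y := x - proj f e I x with hy
  have hy0 := norm_nonneg y
  have hyc : ∀ n, f n y = if n ∈ I then 0 else f n x := fun n => coeff_sub_proj hb I x n
  set B := Λ \ I with hB
  set E := I \ Λ with hE
  have hgB : GreedySet f y B := by
    intro n hn mm hmm
    obtain ⟨hnΛ, hnI⟩ := Finset.mem_sdiff.mp hn
    rw [hyc n, if_neg hnI]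
    by_cases hmmI : mm ∈ I
    · rw [hyc mm, if_pos hmmI, abs_zero]
      exact abs_nonneg _
    · rw [hyc mm, if_neg hmmI]
      have hmmΛ : mm ∉ Λ := fun h => hmm (Finset.mem_sdiff.mpr ⟨h, hmmI⟩)
      exact hg n hnΛ mm hmmΛ
  have hPBy : ‖proj f e B y‖ ≤ Cq * ‖y‖ := hq y B hgB
  have hPBxy : proj f e B x = proj f e B y := by
    rw [proj, proj]
    apply Finset.sum_congr rfl
    intro n hn
    rw [hyc n, if_neg (Finset.mem_sdiff.mp hn).2]
  have hdec : x - proj f e Λ x = y + proj f e E x - proj f e B x := by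
    rw [hy, hE, hB, proj, proj, proj, proj]
    have h1 : ∑ n ∈ I ∩ Λ, f n x • e n + ∑ n ∈ I \ Λ, f n x • e n
        = ∑ n ∈ I, f n x • e n := Finset.sum_inter_add_sum_sdiff I Λ _
    have h2 : ∑ n ∈ Λ ∩ I, f n x • e n + ∑ n ∈ Λ \ I, f n x • e n
        = ∑ n ∈ Λ, f n x • e n := Finset.sum_inter_add_sum_sdiff Λ I _
    have h3 : I ∩ Λ = Λ ∩ I := Finset.inter_comm I Λ
    rw [← h1, ← h2, h3]
    abel
  have hEbound : ‖proj f e E x‖ ≤ (1 + Cq + Δ*(1+3*Cq)) * ‖y‖ := by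
    rcases E.eq_empty_or_nonempty with hEe | hEne
    · rw [hEe, proj_empty, norm_zero]
      have e1 : 0 ≤ (1+Cq)*‖y‖ := mul_nonneg (by linarith) hy0
      have e2 : 0 ≤ Δ*((1+3*Cq)*‖y‖) :=
        mul_nonneg (by linarith) (mul_nonneg (by linarith) hy0)
      nlinarith [e1, e2]
    rcases eq_or_lt_of_le (abs_nonneg (f n₀ x)) with ht0 | ht0
    · have hzero : ∀ n ∈ E, f n x = 0 := by
        intro n hn
        have hnΛ : n ∉ Λ := (Finset.mem_sdiff.mp hn).2
        have h1 : |f n x| ≤ t := hg n₀ hn₀ n hnΛ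
        have h2 : |f n x| ≤ 0 := le_trans h1 (le_of_eq (htdef.trans ht0.symm))
        exact abs_eq_zero.mp (le_antisymm h2 (abs_nonneg _))
      have hPE0 : proj f e E x = 0 := by
        rw [proj]
        apply Finset.sum_eq_zero
        intro n hn
        rw [hzero n hn, zero_smul]
      rw [hPE0, norm_zero]
      have e1 : 0 ≤ (1+Cq)*‖y‖ := mul_nonneg (by linarith) hy0
      have e2 : 0 ≤ Δ*((1+3*Cq)*‖y‖) :=
        mul_nonneg (by linarith) (mul_nonneg (by linarith) hy0)
      nlinarith [e1, e2]
    -- main case 0 < t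
    have ht0' : 0 < t := by rw [htdef]; exact ht0
    set w := t⁻¹ • (y - proj f e B y) with hw
    have hwc : ∀ n, f n w = if n ∈ I ∪ B then 0 else t⁻¹ * f n x := by
      intro n
      rw [hw, map_smul, smul_eq_mul, coeff_sub_proj hb B y]
      by_cases h1 : n ∈ B
      · rw [if_pos h1, if_pos (Finset.mem_union_right _ h1), mul_zero]
      · rw [if_neg h1, hyc n]
        by_cases h2 : n ∈ I
        · rw [if_pos h2, if_pos (Finset.mem_union_left _ h2), mul_zero]
        · rw [if_neg h2, if_neg (by
            intro h
            rcases Finset.mem_union.mp h with h' | h'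
            · exact h2 h'
            · exact h1 h')]
    have hnotΛ : ∀ n, n ∉ I ∪ B → n ∉ Λ := by
      intro n hn hnΛ
      by_cases hnI : n ∈ I
      · exact hn (Finset.mem_union_left _ hnI)
      · exact hn (Finset.mem_union_right _ (Finset.mem_sdiff.mpr ⟨hnΛ, hnI⟩))
    have hwabs : ∀ n, |f n w| ≤ 1 := by
      intro n
      rw [hwc n]
      by_cases h : n ∈ I ∪ B
      · rw [if_pos h, abs_zero]; norm_num
      · rw [if_neg h]
        have h1 : |f n x| ≤ t := hg n₀ hn₀ n (hnotΛ n h)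
        rw [abs_mul, abs_inv, abs_of_pos ht0']
        calc t⁻¹ * |f n x| ≤ t⁻¹ * t :=
              mul_le_mul_of_nonneg_left h1 (inv_nonneg.mpr (abs_nonneg _))
          _ = 1 := inv_mul_cancel₀ (ne_of_gt ht0')
    obtain ⟨ε, hεabs, hεle⟩ := sign_extremal (e := e) t (fun n => f n x) E (y - proj f e B y)
      (fun n hn => hg n₀ hn₀ n (Finset.mem_sdiff.mp hn).2)
    set δ : ℕ → ℝ := fun n => if f n y < 0 then -1 else 1 with hδdef
    have hδabs : ∀ n, |δ n| = 1 := by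
      intro n
      simp only [hδdef]
      by_cases h : f n y < 0 <;> simp [h]
    have hEsub : E ⊆ I := Finset.sdiff_subset
    have hsprE : spread E ≤ I.card := by
      rw [spread, dif_pos hEne]
      have h1 : E.min' hEne ∈ I := hEsub (E.min'_mem hEne)
      have h2 : E.max' hEne ∈ I := hEsub (E.max'_mem hEne)
      rw [hIdef, Finset.mem_Icc] at h1 h2
      rw [hIdef, Nat.card_Icc]
      omega
    have h3 : (I ∩ Λ).card + E.card = I.card := by
      rw [hE]; exact Finset.card_inter_add_card_sdiff I Λ
    have h4 : (Λ ∩ I).card + B.card = Λ.card := by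
      rw [hB]; exact Finset.card_inter_add_card_sdiff Λ I
    have h5 : (Λ ∩ I).card = (I ∩ Λ).card := by rw [Finset.inter_comm]
    have h7 : l * m ≤ (⌈l * (m:ℝ)⌉₊ : ℝ) := Nat.le_ceil _
    have hsE : (l - 1) * (spread E : ℝ) + (E.card : ℝ) ≤ (B.card : ℝ) := by
      have c1 : ((spread E : ℕ):ℝ) ≤ (I.card : ℝ) := by exact_mod_cast hsprE
      have c2 : ((I.card : ℕ):ℝ) ≤ (m:ℝ) := by exact_mod_cast hIm
      have c3 : ((I ∩ Λ).card : ℝ) + (E.card:ℝ) = (I.card:ℝ) := by exact_mod_cast h3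
      have c4 : ((Λ ∩ I).card : ℝ) + (B.card:ℝ) = (Λ.card:ℝ) := by exact_mod_cast h4
      have c5 : ((Λ ∩ I).card:ℝ) = ((I ∩ Λ).card:ℝ) := by exact_mod_cast h5
      have c6 : (Λ.card:ℝ) = (⌈l * (m:ℝ)⌉₊:ℝ) := by exact_mod_cast hcard
      have c7 : (l-1) * (spread E:ℝ) ≤ (l-1) * (m:ℝ) :=
        mul_le_mul_of_nonneg_left (c1.trans c2) (by linarith)
      have c8 : (l-1)*(m:ℝ) + (m:ℝ) = l*(m:ℝ) := by ring
      linarith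
    have hsuppw : ∀ n ∈ B, f n w = 0 := fun n hn => by
      rw [hwc n, if_pos (Finset.mem_union_right _ hn)]
    have hBE : ∀ b' ∈ B, ∀ a' ∈ E, b' < a' := by
      intro b' hb' a' ha'
      obtain ⟨hb'Λ, hb'I⟩ := Finset.mem_sdiff.mp hb'
      have h1 : b' ≤ b := hmax b' hb'Λ
      have ha'I : a' ∈ I := hEsub ha'
      rw [hIdef, Finset.mem_Icc] at ha'I
      rw [hIdef, Finset.mem_Icc] at hb'I
      rcases Nat.lt_or_ge b' a with hlt | hge
      · omega
      · exact absurd ⟨hge, h1⟩ hb'I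
    have hsurrw : Surrounds f w E := by
      intro a' ha' b' hb' n hn1 hn2
      have ha'I : a' ∈ I := hEsub ha'
      have hb'I : b' ∈ I := hEsub hb'
      rw [hIdef, Finset.mem_Icc] at ha'I hb'I
      have hnI : n ∈ I := by rw [hIdef, Finset.mem_Icc]; omega
      rw [hwc n, if_pos (Finset.mem_union_left _ hnI)]
    have hRP := hsl w hwabs ε δ hεabs hδabs E B hsE hsuppw hBE hsurrw
    have htley : ∀ n ∈ B, t ≤ |f n y| := by
      intro n hn
      obtain ⟨hnΛ, hnI⟩ := Finset.mem_sdiff.mp hn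
      rw [hyc n, if_neg hnI]
      exact hmin n hnΛ
    have hflat : ‖∑ n ∈ B, (t * (if f n y < 0 then (-1:ℝ) else 1)) • e n‖ ≤ 2*Cq*‖y‖ :=
      flatten (by linarith) hq y B hgB t ht0' htley
    have hyB : ‖y - proj f e B y‖ ≤ (1+Cq)*‖y‖ := by
      calc ‖y - proj f e B y‖ ≤ ‖y‖ + ‖proj f e B y‖ := norm_sub_le _ _
        _ ≤ (1+Cq)*‖y‖ := by linarith
    have htw : t • w = y - proj f e B y := by
      rw [hw, smul_smul, mul_inv_cancel₀ (ne_of_gt ht0'), one_smul]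
    have hstep1 : ‖proj f e E x‖
        ≤ ‖(y - proj f e B y) + ∑ n ∈ E, f n x • e n‖ + ‖y - proj f e B y‖ := by
      have hid : proj f e E x
          = ((y - proj f e B y) + ∑ n ∈ E, f n x • e n) - (y - proj f e B y) := by
        rw [proj]; abel
      rw [hid]
      exact norm_sub_le _ _
    have hstep2 : ‖(y - proj f e B y) + ∑ n ∈ E, (t * ε n) • e n‖
        = t * ‖w + ∑ n ∈ E, ε n • e n‖ := by
      have h1 : (y - proj f e B y) + ∑ n ∈ E, (t * ε n) • e n
          = t • (w + ∑ n ∈ E, ε n • e n) := by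
        rw [smul_add, htw, Finset.smul_sum]
        congr 1
        apply Finset.sum_congr rfl
        intro n _
        rw [smul_smul]
      rw [h1]
      have h2 := norm_smul t (w + ∑ n ∈ E, ε n • e n)
      rw [h2, Real.norm_eq_abs, abs_of_pos ht0']
    have hδsum : ∑ n ∈ B, (t * δ n) • e n = t • ∑ n ∈ B, δ n • e n := by
      rw [Finset.smul_sum]
      apply Finset.sum_congr rfl
      intro n _
      rw [smul_smul]
    have h3' : t * ‖∑ n ∈ B, δ n • e n‖ = ‖∑ n ∈ B, (t * δ n) • e n‖ := by
      rw [hδsum]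
      have h2 := norm_smul t (∑ n ∈ B, δ n • e n)
      rw [h2, Real.norm_eq_abs, abs_of_pos ht0']
    have h4' : ‖∑ n ∈ B, (t * δ n) • e n‖ ≤ 2*Cq*‖y‖ := by
      have hcong : ∀ n ∈ B, (t * δ n) • e n
          = (t * (if f n y < 0 then (-1:ℝ) else 1)) • e n := by
        intro n _
        simp only [hδdef]
      rw [Finset.sum_congr rfl hcong]
      exact hflat
    have hstep3 : t * ‖w + ∑ n ∈ B, δ n • e n‖ ≤ (1+Cq)*‖y‖ + 2*Cq*‖y‖ := by
      have h1 : t * ‖w + ∑ n ∈ B, δ n • e n‖ ≤ t*‖w‖ + t*‖∑ n ∈ B, δ n • e n‖ := by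
        have h := norm_add_le w (∑ n ∈ B, δ n • e n)
        have := mul_le_mul_of_nonneg_left h ht0'.le
        linarith [this]
      have h2 : t*‖w‖ = ‖y - proj f e B y‖ := by
        have h3 := norm_smul t w
        rw [htw] at h3
        rw [h3, Real.norm_eq_abs, abs_of_pos ht0']
      linarith
    calc ‖proj f e E x‖
        ≤ ‖(y - proj f e B y) + ∑ n ∈ E, f n x • e n‖ + ‖y - proj f e B y‖ := hstep1
      _ ≤ ‖(y - proj f e B y) + ∑ n ∈ E, (t * ε n) • e n‖ + (1+Cq)*‖y‖ := by
          have := hεle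
          linarith [hεle, hyB]
      _ = t * ‖w + ∑ n ∈ E, ε n • e n‖ + (1+Cq)*‖y‖ := by rw [hstep2]
      _ ≤ t * (Δ * ‖w + ∑ n ∈ B, δ n • e n‖) + (1+Cq)*‖y‖ := by
          have := mul_le_mul_of_nonneg_left hRP ht0'.le
          linarith
      _ ≤ Δ * ((1+Cq)*‖y‖ + 2*Cq*‖y‖) + (1+Cq)*‖y‖ := by
          have h1 : t * (Δ * ‖w + ∑ n ∈ B, δ n • e n‖)
              = Δ * (t * ‖w + ∑ n ∈ B, δ n • e n‖) := by ring
          rw [h1]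
          have := mul_le_mul_of_nonneg_left hstep3 (show (0:ℝ) ≤ Δ by linarith)
          linarith
      _ ≤ (1 + Cq + Δ*(1+3*Cq)) * ‖y‖ := le_of_eq (by ring)
  have hPBx : ‖proj f e B x‖ ≤ Cq * ‖y‖ := by rw [hPBxy]; exact hPBy
  calc ‖x - proj f e Λ x‖ = ‖y + proj f e E x - proj f e B x‖ := by rw [hdec]
    _ ≤ ‖y + proj f e E x‖ + ‖proj f e B x‖ := norm_sub_le _ _
    _ ≤ ‖y‖ + ‖proj f e E x‖ + ‖proj f e B x‖ := by
        linarith [norm_add_le y (proj f e E x)]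
    _ ≤ (2 + 2*Cq + Δ*(1+3*Cq)) * ‖y‖ := by linarith [hEbound, hPBx]

end bwd
/-- a basis is (λ, RPGII) iff it is quasi-greedy and (λ, RPSLC). -/
theorem stmt_9 [CompleteSpace X] (f : ℕ → X →L[ℝ] ℝ) (e : ℕ → X)
    (hb : BasisSystem f e) (l : ℝ) (hl : 1 ≤ l) :
    (∃ C : ℝ, 1 ≤ C ∧ RPGII f e l C) ↔
      ((∃ Cq : ℝ, QG f e Cq) ∧ ∃ Δ : ℝ, 1 ≤ Δ ∧ RPSLC f e l Δ) := by
  constructor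
  · rintro ⟨C, hC1, hR⟩
    obtain ⟨Cq, hCq1, hq⟩ := fwd_qg hb hl hC1 hR
    refine ⟨⟨Cq, hq⟩, (C+1)*(1+Cq), by nlinarith, fwd_rpslc hb hl hC1 hCq1 hR hq⟩
  · rintro ⟨⟨Cq0, hq0⟩, Δ, hΔ1, hsl⟩
    set Cq := max Cq0 1 with hCqdef
    have hCq1 : 1 ≤ Cq := le_max_right _ _
    have hq : QG f e Cq := by
      intro v Γ hΓ
      calc ‖proj f e Γ v‖ ≤ Cq0 * ‖v‖ := hq0 v Γ hΓ
        _ ≤ Cq * ‖v‖ := mul_le_mul_of_nonneg_right (le_max_left _ _) (norm_nonneg v)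
    set C := 2 + 2*Cq + Δ*(1+3*Cq) with hC
    have hC1 : 1 ≤ C := by nlinarith
    have hC0 : (0:ℝ) < C := by linarith
    refine ⟨C, hC1, ?_⟩
    intro x m Λ hcard hg
    have hlow : ‖x - proj f e Λ x‖ / C ≤ checkSigma f e Λ m x := by
      rw [checkSigma]
      apply le_csInf
      · exact ⟨‖x - proj f e (∅:Finset ℕ) x‖, ⟨∅, Or.inl rfl, by simp, rfl⟩⟩
      · rintro r ⟨I, hIopt, hIm, rfl⟩
        rw [div_le_iff₀ hC0, mul_comm]
        exact bwd_key hb hl hCq1 hΔ1 hq hsl x m Λ hcard hg I hIopt hIm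
    calc ‖x - proj f e Λ x‖ = C * (‖x - proj f e Λ x‖ / C) := by field_simp
      _ ≤ C * checkSigma f e Λ m x := mul_le_mul_of_nonneg_left hlow hC0.le
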